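/- Let X be a real inner product space and n ≥ 2, and let x, y, x₂, ..., xₙ ∈ X. Then the n-iterated 2-inner product is represented in terms of standard k-inner products as (x,y|xₙ,...,x₂)_* = Eₙ · ⟨x,y|xₙ,...,x₂⟩, where E₂ = 1 and, for n ≥ 3, Eₙ = ∏_{k=2}^{n−1} ⟨xₖ,xₖ|x_{k−1},...,x₂⟩^(2^{n−k−1}) (with the convention ⟨x₂,x₂|⟩ = ⟨x₂,x₂⟩ for k = 2). -/
import Mathlib


open scoped InnerProductSpace

/-- The `n`-iterated 2-inner product `(x, y | xₙ, …, x₂)_*` on a real inner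
product space, where the list `l = [xₙ, x_{n-1}, …, x₂]` collects the
conditioning vectors (so `n = l.length + 1`).  For the empty list it is the
inner product `⟪x, y⟫` (the convention for `n = 1`), and
`(x, y | xₙ, …, x₂)_* = (x,y|x_{n-1},…,x₂)_* (xₙ,xₙ|x_{n-1},…,x₂)_*
  - (x,xₙ|x_{n-1},…,x₂)_* (xₙ,y|x_{n-1},…,x₂)_*`.
In particular `(x,y|z)_* = ⟪x,y⟫⟪z,z⟫ - ⟪x,z⟫⟪z,y⟫`. -/
noncomputable def iter2 {X : Type*} [NormedAddCommGroup X] [InnerProductSpace ℝ X] :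
    X → X → List X → ℝ
  | x, y, [] => ⟪x, y⟫_ℝ
  | x, y, (z :: l) => iter2 x y l * iter2 z z l - iter2 x z l * iter2 z y l

/-- The standard `n`-inner product `⟨x, y | x₂, …, xₙ⟩` on a real inner product
space, given by the determinant of the `n × n` matrix whose first row is
`(⟪x,y⟫, ⟪x,x₂⟫, …, ⟪x,xₙ⟫)` and whose `i`-th row (`2 ≤ i ≤ n`) is
`(⟪xᵢ,y⟫, ⟪xᵢ,x₂⟫, …, ⟪xᵢ,xₙ⟫)`.  The list `l` collects the conditioning
vectors `x₂, …, xₙ` (the determinant is invariant under their order);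
for `l = []` it is `⟪x, y⟫`. -/
noncomputable def stdNInner {X : Type*} [NormedAddCommGroup X] [InnerProductSpace ℝ X]
    (x y : X) (l : List X) : ℝ :=
  Matrix.det (Matrix.of fun i j : Fin (l.length + 1) =>
    ⟪(x :: l).get i, (y :: l).get j⟫_ℝ)


set_option linter.unusedSectionVars false
set_option maxHeartbeats 1000000

namespace Iter2Aux
variable {X : Type*} [NormedAddCommGroup X] [InnerProductSpace ℝ X]

noncomputable def gmat {m : ℕ} (r c : Fin m → X) : Matrix (Fin m) (Fin m) ℝ :=
  Matrix.of fun i j => ⟪r i, c j⟫_ℝ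

def e1 (m : ℕ) : Fin (m + 1) ≃ Fin 1 ⊕ Fin m :=
  (finCongr (Nat.add_comm m 1)).trans finSumFinEquiv.symm

lemma e1_zero (m : ℕ) : e1 m 0 = Sum.inl 0 := by
  have : (finCongr (Nat.add_comm m 1) (0 : Fin (m+1))) = Fin.castAdd m (0 : Fin 1) := by
    ext; simp
  simp [e1, this]

lemma e1_succ (m : ℕ) (i : Fin m) : e1 m i.succ = Sum.inr i := by
  have : (finCongr (Nat.add_comm m 1) i.succ) = Fin.natAdd 1 i := by
    ext; simp [Nat.add_comm]
  simp [e1, this]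

lemma cons_elim_e1 {m : ℕ} (a : X) (r : Fin m → X) (i : Fin (m + 1)) :
    (Fin.cons a r : Fin (m+1) → X) i = Sum.elim (fun _ : Fin 1 => a) r (e1 m i) := by
  refine Fin.cases ?_ ?_ i
  · rw [e1_zero]; simp
  · intro j; rw [e1_succ]; simp

def e2 (m : ℕ) : Fin (m + 2) ≃ Fin 2 ⊕ Fin m :=
  (finCongr (Nat.add_comm m 2)).trans finSumFinEquiv.symm

lemma e2_zero (m : ℕ) : e2 m 0 = Sum.inl 0 := by
  have : (finCongr (Nat.add_comm m 2) (0 : Fin (m+2))) = Fin.castAdd m (0 : Fin 2) := by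
    ext; simp
  simp [e2, this]

lemma e2_one (m : ℕ) : e2 m 1 = Sum.inl 1 := by
  have : (finCongr (Nat.add_comm m 2) (1 : Fin (m+2))) = Fin.castAdd m (1 : Fin 2) := by
    ext; simp
  simp [e2, this]

lemma e2_succ_succ (m : ℕ) (i : Fin m) : e2 m i.succ.succ = Sum.inr i := by
  have : (finCongr (Nat.add_comm m 2) i.succ.succ) = Fin.natAdd 2 i := by
    ext; simp; omega
  simp [e2, this]

lemma cons_cons_elim_e2 {m : ℕ} (a b : X) (r : Fin m → X) (i : Fin (m + 2)) :
    (Fin.cons a (Fin.cons b r) : Fin (m+2) → X) i = Sum.elim (![a, b]) r (e2 m i) := by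
  refine Fin.cases ?_ ?_ i
  · rw [e2_zero]; simp
  · intro j
    refine Fin.cases ?_ ?_ j
    · rw [show (0 : Fin (m+1)).succ = (1 : Fin (m+2)) by rfl, e2_one]; simp
    · intro k; rw [e2_succ_succ]; simp

/-- Scalar Schur complement entry. -/
noncomputable def sch {m : ℕ} (N : Matrix (Fin m) (Fin m) ℝ) (a b : X) (r : Fin m → X) : ℝ :=
  ⟪a, b⟫_ℝ - ∑ i, ∑ j, ⟪a, r i⟫_ℝ * N i j * ⟪r j, b⟫_ℝ

end Iter2Aux

namespace Iter2Aux
variable {X : Type*} [NormedAddCommGroup X] [InnerProductSpace ℝ X]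

lemma mul3_apply {p q m : ℕ} (B : Matrix (Fin p) (Fin m) ℝ) (N : Matrix (Fin m) (Fin m) ℝ)
    (C : Matrix (Fin m) (Fin q) ℝ) (i : Fin p) (j : Fin q) :
    (B * N * C) i j = ∑ k, ∑ l, B i k * N k l * C l j := by
  simp only [Matrix.mul_apply, Finset.sum_mul]
  rw [Finset.sum_comm]

lemma det_border_one {m : ℕ} (a b : X) (r : Fin m → X) [Invertible (gmat r r)] :
    (gmat (Fin.cons a r) (Fin.cons b r)).det
      = (gmat r r).det * sch (⅟(gmat r r)) a b r := by
  have hM : gmat (Fin.cons a r) (Fin.cons b r) =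
      (Matrix.fromBlocks (Matrix.of fun _ _ : Fin 1 => ⟪a, b⟫_ℝ)
        (Matrix.of fun (_ : Fin 1) j => ⟪a, r j⟫_ℝ)
        (Matrix.of fun i (_ : Fin 1) => ⟪r i, b⟫_ℝ) (gmat r r)).submatrix (e1 m) (e1 m) := by
    ext i j
    rw [Matrix.submatrix_apply]
    show ⟪(Fin.cons a r : Fin (m+1) → X) i, (Fin.cons b r : Fin (m+1) → X) j⟫_ℝ = _
    rw [cons_elim_e1, cons_elim_e1]
    rcases e1 m i with i' | i' <;> rcases e1 m j with j' | j' <;>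
      simp [Matrix.fromBlocks, gmat]
  rw [hM, Matrix.det_submatrix_equiv_self, Matrix.det_fromBlocks₂₂, Matrix.det_fin_one]
  congr 1
  simp only [Matrix.sub_apply, sch, mul3_apply, Matrix.of_apply]

lemma det_border_two {m : ℕ} (x z y : X) (r : Fin m → X) [Invertible (gmat r r)] :
    (gmat (Fin.cons x (Fin.cons z r)) (Fin.cons y (Fin.cons z r))).det
      = (gmat r r).det *
        (sch (⅟(gmat r r)) x y r * sch (⅟(gmat r r)) z z r
          - sch (⅟(gmat r r)) x z r * sch (⅟(gmat r r)) z y r) := by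
  have hM : gmat (Fin.cons x (Fin.cons z r)) (Fin.cons y (Fin.cons z r)) =
      (Matrix.fromBlocks (Matrix.of fun i j : Fin 2 => ⟪![x, z] i, ![y, z] j⟫_ℝ)
        (Matrix.of fun (i : Fin 2) j => ⟪![x, z] i, r j⟫_ℝ)
        (Matrix.of fun i (j : Fin 2) => ⟪r i, ![y, z] j⟫_ℝ) (gmat r r)).submatrix
          (e2 m) (e2 m) := by
    ext i j
    rw [Matrix.submatrix_apply]
    show ⟪(Fin.cons x (Fin.cons z r) : Fin (m+2) → X) i,
          (Fin.cons y (Fin.cons z r) : Fin (m+2) → X) j⟫_ℝ = _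
    rw [cons_cons_elim_e2, cons_cons_elim_e2]
    rcases e2 m i with i' | i' <;> rcases e2 m j with j' | j' <;>
      simp [Matrix.fromBlocks, gmat]
  rw [hM, Matrix.det_submatrix_equiv_self, Matrix.det_fromBlocks₂₂, Matrix.det_fin_two]
  congr 1
  simp only [Matrix.sub_apply, sch, mul3_apply, Matrix.of_apply]
  simp

end Iter2Aux

namespace Iter2Aux
variable {X : Type*} [NormedAddCommGroup X] [InnerProductSpace ℝ X]

lemma det_border_singular {m : ℕ} (a b : X) (r : Fin m → X)
    (h : (gmat r r).det = 0) :
    (gmat (Fin.cons a r) (Fin.cons b r)).det = 0 := by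
  obtain ⟨v, hv, hmv⟩ := (Matrix.exists_mulVec_eq_zero_iff).mpr h
  set u : X := ∑ j, v j • r j with hu
  have hru : ∀ i, ⟪r i, u⟫_ℝ = 0 := by
    intro i
    have := congrFun hmv i
    simpa [Matrix.mulVec, dotProduct, gmat, hu, inner_sum, real_inner_smul_right,
      mul_comm] using this
  have hu0 : u = 0 := by
    have : ⟪u, u⟫_ℝ = 0 := by
      rw [hu]
      simp only [sum_inner, real_inner_smul_left]
      refine Finset.sum_eq_zero fun j _ => ?_
      rw [← hu, hru j, mul_zero]
    exact inner_self_eq_zero.mp this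
  rw [← Matrix.exists_mulVec_eq_zero_iff]
  refine ⟨Fin.cons 0 v, ?_, ?_⟩
  · intro hc
    apply hv
    funext j
    have := congrFun hc j.succ
    simpa using this
  · funext i
    have : ((gmat (Fin.cons a r) (Fin.cons b r)).mulVec (Fin.cons 0 v)) i
        = ⟪(Fin.cons a r : Fin (m+1) → X) i, u⟫_ℝ := by
      simp [Matrix.mulVec, dotProduct, Fin.sum_univ_succ, gmat, hu, inner_sum,
        real_inner_smul_right, mul_comm]
    rw [Pi.zero_apply, this, hu0, inner_zero_right]

/-- Desnanot–Jacobi identity for Gram-type matrices. -/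
lemma dj {m : ℕ} (x z y : X) (r : Fin m → X) :
    (gmat (Fin.cons x (Fin.cons z r)) (Fin.cons y (Fin.cons z r))).det * (gmat r r).det
      = (gmat (Fin.cons z r) (Fin.cons z r)).det * (gmat (Fin.cons x r) (Fin.cons y r)).det
        - (gmat (Fin.cons x r) (Fin.cons z r)).det *
            (gmat (Fin.cons z r) (Fin.cons y r)).det := by
  by_cases h : (gmat r r).det = 0
  · rw [h, mul_zero, det_border_singular _ _ _ h, det_border_singular _ _ _ h,
      det_border_singular _ _ _ h, det_border_singular _ _ _ h]
    ring
  · haveI : Invertible (gmat r r) := (gmat r r).invertibleOfIsUnitDet (isUnit_iff_ne_zero.mpr h)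
    rw [det_border_two, det_border_one, det_border_one, det_border_one, det_border_one]
    ring

end Iter2Aux

namespace Iter2Aux
variable {X : Type*} [NormedAddCommGroup X] [InnerProductSpace ℝ X]

lemma get_cons (x : X) (l : List X) :
    (x :: l).get = (Fin.cons x l.get : Fin (l.length + 1) → X) := by
  funext i
  refine Fin.cases ?_ ?_ i <;> simp

noncomputable def stdNInner' (x y : X) (l : List X) : ℝ :=
  (gmat (Fin.cons x l.get) (Fin.cons y l.get)).det

lemma stdNInner_eq (x y : X) (l : List X) : stdNInner x y l = stdNInner' x y l := by
  show (gmat (x :: l).get (y :: l).get).det = _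
  rw [get_cons, get_cons]
  rfl

noncomputable def gramDet (l : List X) : ℝ := (gmat l.get l.get).det

lemma gramDet_cons (w : X) (t : List X) : gramDet (w :: t) = stdNInner w w t := by
  rw [stdNInner_eq]
  show (gmat (w :: t).get (w :: t).get).det = _
  rw [get_cons]
  rfl

noncomputable def iterFactor : List X → ℝ
  | [] => 1
  | (_ :: l) => iterFactor l ^ 2 * gramDet l

lemma iter2_eq_factor (l : List X) : ∀ x y : X,
    iter2 x y l = iterFactor l * stdNInner' x y l := by
  induction l with
  | nil =>
    intro x y
    simp [iter2, iterFactor, stdNInner', gmat, Matrix.det_fin_one]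
  | cons z l ih =>
    intro x y
    show iter2 x y l * iter2 z z l - iter2 x z l * iter2 z y l = _
    rw [ih x y, ih z z, ih x z, ih z y]
    show _ = iterFactor l ^ 2 * gramDet l * stdNInner' x y (z :: l)
    unfold stdNInner' gramDet
    rw [get_cons]
    have h := dj x z y l.get
    linear_combination (-(iterFactor l ^ 2)) * h

noncomputable def rprod (l : List X) : ℝ :=
  ∏ i ∈ Finset.range l.length,
    (stdNInner (l.getD i 0) (l.getD i 0) (l.drop (i + 1))) ^ (2 ^ i)

lemma rprod_cons (w : X) (t : List X) :
    rprod (w :: t) = stdNInner w w t * rprod t ^ 2 := by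
  unfold rprod
  rw [show (w :: t).length = t.length + 1 from rfl, Finset.prod_range_succ']
  simp only [List.getD_cons_succ, List.drop_succ_cons, List.getD_cons_zero, List.drop_zero,
    pow_zero, pow_one, pow_succ 2, pow_mul, ← Finset.prod_pow]
  ring

lemma iterFactor_cons (t : List X) : ∀ z : X, iterFactor (z :: t) = rprod t := by
  induction t with
  | nil =>
    intro z
    show iterFactor [] ^ 2 * gramDet [] = _
    simp [iterFactor, gramDet, rprod, Matrix.det_fin_zero]
  | cons w t ih =>
    intro z
    show iterFactor (w :: t) ^ 2 * gramDet (w :: t) = _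
    rw [ih w, gramDet_cons, rprod_cons]
    ring

lemma prod_Icc_one (n : ℕ) (f : ℕ → ℝ) :
    ∏ j ∈ Finset.Icc 1 n, f j = ∏ i ∈ Finset.range n, f (i + 1) := by
  induction n with
  | zero => simp
  | succ n ih => rw [Finset.prod_Icc_succ_top (by omega), Finset.prod_range_succ, ih]

end Iter2Aux

/-- Representation of the `n`-iterated 2-inner product in terms of the standard
`k`-inner products (`k ≤ n`): for conditioning vectors `xₙ, …, x₂` (a list of
length `n - 1 ≥ 1`),
`(x, y | xₙ, …, x₂)_* = Eₙ ⟨x, y | xₙ, …, x₂⟩`, where `E₂ = 1` and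
`Eₙ = ∏_{k=2}^{n-1} ⟨xₖ, xₖ | x_{k-1}, …, x₂⟩^(2^(n-k-1))` for `n ≥ 3`.
Here the list `z :: l = [xₙ, …, x₂]`, so `xₖ` is the entry at position
`j = n - k` and `[x_{k-1}, …, x₂]` is what remains after dropping the first
`j + 1` entries; the exponent is `2^(n-k-1) = 2^(j-1)`. -/
theorem iter2_eq_stdNInner_mul {X : Type*} [NormedAddCommGroup X] [InnerProductSpace ℝ X]
    (x y z : X) (l : List X) :
    iter2 x y (z :: l) =
      (∏ j ∈ Finset.Icc 1 l.length,
        (stdNInner ((z :: l).getD j 0) ((z :: l).getD j 0) ((z :: l).drop (j + 1)))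
          ^ (2 ^ (j - 1)))
        * stdNInner x y (z :: l) := by
  rw [Iter2Aux.iter2_eq_factor, Iter2Aux.iterFactor_cons, Iter2Aux.stdNInner_eq,
    Iter2Aux.prod_Icc_one]
  congr 1
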